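/- Let G be a finitely generated group, and suppose that the real vector space of Aut-invariant homogeneous quasimorphisms on G (a linear subspace of the space of all functions G → ℝ) is infinite-dimensional. Then the stable autocommutator length is unbounded on the commutator subgroup: for every C > 0 there exists g ∈ [G, G] such that for all n ≥ 1, whenever gⁿ is a product of k autocommutators, one has k ≥ C·n. -/

import Mathlib

/-- if a finitely generated group `G` has an infinite-dimensional space of
`Aut`-invariant homogeneous quasimorphisms, then stable autocommutator length is
unbounded on the commutator subgroup. -/
theorem sacl_unbounded_of_infinite_dim_aut_invariant_qms
    {G : Type*} [Group G] (hfg : Group.FG G)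
    (hdim : ¬ FiniteDimensional ℝ
      (Submodule.span ℝ {f : G → ℝ |
        (∃ D : ℝ, ∀ g h : G, |f g + f h - f (g * h)| ≤ D) ∧
        (∀ (g : G) (n : ℤ), f (g ^ n) = n * f g) ∧
        (∀ (φ : G ≃* G) (g : G), f (φ g) = f g)})) :
    ∀ C : ℝ, 0 < C → ∃ g ∈ commutator G,
      ∀ n : ℕ, 1 ≤ n → ∀ L : List G,
        (∀ t ∈ L, ∃ (φ : G ≃* G) (h : G), t = φ h * h⁻¹) →
        L.prod = g ^ n → C * n ≤ L.length := by
  by_contra hcon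
  push_neg at hcon
  obtain ⟨C, hC, hshort⟩ := hcon
  set S : Set (G → ℝ) := {f : G → ℝ |
        (∃ D : ℝ, ∀ g h : G, |f g + f h - f (g * h)| ≤ D) ∧
        (∀ (g : G) (n : ℤ), f (g ^ n) = n * f g) ∧
        (∀ (φ : G ≃* G) (g : G), f (φ g) = f g)} with hS
  apply hdim
  -- the submodule of additive characters
  set M : Submodule ℝ (G → ℝ) :=
    { carrier := {f | ∀ g h : G, f (g * h) = f g + f h}
      add_mem' := fun {a b} ha hb g h => by
        simp only [Pi.add_apply]; rw [ha g h, hb g h]; ring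
      zero_mem' := fun g h => by simp
      smul_mem' := fun c a ha g h => by
        simp only [Pi.smul_apply, smul_eq_mul]; rw [ha g h]; ring } with hM
  -- every f in S is an additive character
  have hSM : S ⊆ (M : Set (G → ℝ)) := by
    intro f hf
    obtain ⟨⟨D, hD⟩, hhom, hinv⟩ := hf
    have hf1 : f 1 = 0 := by
      have := hhom 1 0
      simpa using this
    have hDpos : 0 ≤ D := by
      have := hD 1 1
      simp [hf1] at this
      exact this
    have hfinv : ∀ g : G, f g⁻¹ = - f g := by
      intro g
      have := hhom g (-1)
      simpa using this
    have hpow : ∀ (x : G) (n : ℕ), f (x ^ n) = n * f x := by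
      intro x n
      have := hhom x n
      rw [zpow_natCast] at this
      push_cast at this
      exact this
    -- bound on autocommutators
    have hac : ∀ t : G, (∃ (φ : G ≃* G) (h : G), t = φ h * h⁻¹) → |f t| ≤ D := by
      rintro t ⟨φ, h, rfl⟩
      have := hD (φ h) h⁻¹
      rw [hinv φ h, hfinv h] at this
      simpa using this
    -- bound on products of lists
    have hlist : ∀ L : List G, (∀ t ∈ L, |f t| ≤ D) →
        |f L.prod| ≤ (2 * L.length + 1) * D := by
      intro L
      induction L with
      | nil => intro _; simpa [hf1] using by linarith
      | cons t L ih =>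
        intro hmem
        have h1 : |f t| ≤ D := hmem t (by simp)
        have h2 : |f L.prod| ≤ (2 * L.length + 1) * D :=
          ih (fun s hs => hmem s (by simp [hs]))
        have h3 := hD t L.prod
        obtain ⟨h3a, h3b⟩ := abs_le.mp h3
        obtain ⟨h1a, h1b⟩ := abs_le.mp h1
        obtain ⟨h2a, h2b⟩ := abs_le.mp h2
        simp only [List.prod_cons, List.length_cons]
        rw [abs_le]
        push_cast
        constructor <;> linarith
    -- uniform bound on the commutator subgroup
    set B : ℝ := 2 * C * D + D with hB
    have hBpos : 0 ≤ B := by positivity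
    have hbound : ∀ g ∈ commutator G, |f g| ≤ B := by
      intro g hg
      obtain ⟨n, hn1, L, hLac, hLprod, hLlen⟩ := hshort g hg
      have h1 : |f L.prod| ≤ (2 * L.length + 1) * D := hlist L (fun t ht => hac t (hLac t ht))
      rw [hLprod, hpow, abs_mul, Nat.abs_cast] at h1
      have hn1' : (1 : ℝ) ≤ n := by exact_mod_cast hn1
      have habs : 0 ≤ |f g| := abs_nonneg _
      have hd : (2 * L.length + 1 : ℝ) * D ≤ (2 * C * n + 1) * D := by
        have : (L.length : ℝ) < C * n := hLlen
        nlinarith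
      have hkey : (n : ℝ) * |f g| ≤ (2 * C * n + 1) * D := le_trans h1 hd
      have hnn : (0:ℝ) < n := by linarith
      rw [hB, ← mul_le_mul_iff_right₀ hnn]
      nlinarith
    -- conclude f is an additive character
    intro g h
    have hmem : ∀ n : ℕ, (g*h)^n * (g^n*h^n)⁻¹ ∈ commutator G := by
      intro n
      rw [← QuotientGroup.eq_one_iff ((g*h)^n * (g^n*h^n)⁻¹) (N := commutator G)]
      show Abelianization.of ((g*h)^n * (g^n*h^n)⁻¹) = 1
      rw [map_mul, map_pow, map_inv, map_mul, map_mul, map_pow, map_pow, mul_pow]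
      group
    set X : ℝ := f (g * h) - f g - f h with hX
    have hkey : ∀ n : ℕ, 1 ≤ n → (n : ℝ) * |X| ≤ 2 * D + B := by
      intro n hn
      set c : G := (g*h)^n * (g^n*h^n)⁻¹ with hc
      have hprod : c * (g^n * h^n) = (g*h)^n := by
        rw [hc]; group
      have h1 : |f c + f (g^n * h^n) - f ((g*h)^n)| ≤ D := by
        rw [← hprod]; exact hD c (g^n * h^n)
      have h2 : |f (g^n) + f (h^n) - f (g^n * h^n)| ≤ D := hD (g^n) (h^n)
      have h3 : |f c| ≤ B := hbound c (hmem n)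
      rw [hpow (g*h) n] at h1
      rw [hpow g n, hpow h n] at h2
      obtain ⟨h1a, h1b⟩ := abs_le.mp h1
      obtain ⟨h2a, h2b⟩ := abs_le.mp h2
      obtain ⟨h3a, h3b⟩ := abs_le.mp h3
      have : |(n:ℝ) * X| ≤ 2 * D + B := by
        rw [abs_le, hX]
        constructor <;> nlinarith [mul_sub (n:ℝ) (f (g*h)) (f g)]
      calc (n:ℝ) * |X| = |(n:ℝ)| * |X| := by rw [Nat.abs_cast]
        _ = |(n:ℝ) * X| := (abs_mul _ _).symm
        _ ≤ 2 * D + B := this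
    have hX0 : X = 0 := by
      by_contra hX0
      have hXpos : 0 < |X| := abs_pos.mpr hX0
      obtain ⟨n, hn⟩ := exists_nat_gt ((2 * D + B) / |X|)
      have hn0 : (0:ℝ) < n := lt_of_le_of_lt (div_nonneg (by linarith) hXpos.le) hn
      have hn1 : 1 ≤ n := by exact_mod_cast Nat.one_le_iff_ne_zero.mpr (by
        intro hz; rw [hz] at hn0; simp at hn0)
      have := hkey n hn1
      rw [div_lt_iff₀ hXpos] at hn
      linarith
    have : f (g * h) - f g - f h = 0 := hX0
    linarith
  -- finite dimensionality
  have hspan : Submodule.span ℝ S ≤ M := Submodule.span_le.mpr hSM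
  obtain ⟨T, hT1, hT2⟩ := Group.fg_iff.mp hfg
  haveI : Fintype ↥T := hT2.fintype
  -- evaluation map on generators
  let ev : M →ₗ[ℝ] (↥T → ℝ) :=
    { toFun := fun a t => a.1 t
      map_add' := fun a b => rfl
      map_smul' := fun c a => rfl }
  have hinj : Function.Injective ev := by
    intro a b hab
    have hadd : ∀ x y : G, (a.1 x - b.1 x) + (a.1 y - b.1 y) = a.1 (x*y) - b.1 (x*y) := by
      intro x y
      have ha := a.2 x y
      have hb := b.2 x y
      change a.1 (x*y) = a.1 x + a.1 y at ha
      change b.1 (x*y) = b.1 x + b.1 y at hb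
      rw [ha, hb]; ring
    have hzero : ∀ g : G, a.1 g - b.1 g = 0 := by
      have h1 : a.1 1 - b.1 1 = 0 := by
        have := hadd 1 1
        simp at this
        linarith
      intro g
      have hg : g ∈ Subgroup.closure T := by rw [hT1]; trivial
      induction hg using Subgroup.closure_induction with
      | mem x hx =>
        have : ev a ⟨x, hx⟩ = ev b ⟨x, hx⟩ := by rw [hab]
        simpa [ev] using sub_eq_zero_of_eq this
      | one => exact h1
      | mul x y hx hy ihx ihy =>
        have := hadd x y
        rw [ihx, ihy] at this
        linarith
      | inv x hx ihx =>
        have := hadd x x⁻¹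
        simp only [mul_inv_cancel] at this
        rw [ihx, h1] at this
        linarith
    exact Subtype.ext (funext fun g => sub_eq_zero.mp (hzero g))
  haveI : FiniteDimensional ℝ M := FiniteDimensional.of_injective ev hinj
  exact Submodule.finiteDimensional_of_le hspan
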